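/- arXiv:1804.01045 — 2 statements merged into one kernel-verified Lean document; each statement's English description precedes it below -/
import Mathlib

section
/- Suppose a pivot inserts dart d⁺ into the holiest shortest path tree T while removing dart d⁻ (the old predecessor of the head of d⁺). Let d = x→y be any dart such that x turns from red to blue during the pivot while y does not change colors. Then [cycle(T − d⁻ + d⁺, d)] = [cycle(T, d)] + [cycle(T, d⁺)]. -/
/-!
Common combinatorial framework for graphs cellularly embedded on orientable surfaces,
following Erickson, Fox, and Lkhamsuren, "Holiest Minimum-Cost Paths and Flows in
Surface Graphs".

A graph `G = (V, E, F)` embedded on an orientable surface is given combinatorially by a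
finite set of darts together with a fixed-point-free involution `rev` (whose orbits are
the edges) and a permutation `next` (= π, whose orbits are the vertices); the faces are
the orbits of `rev ∘ next`, and the genus `g` is determined by Euler's formula
`|V| - |E| + |F| = 2 - 2g`.
-/

noncomputable section

open Finset

open scoped Classical

set_option maxHeartbeats 1000000

structure CombSurface where
  /-- the darts -/
  D : Type
  /-- the vertices (orbits of `next`) -/
  V : Type
  /-- the faces (orbits of `rev ∘ next`) -/
  F : Type
  [finD : Fintype D]
  [deqD : DecidableEq D]
  [finV : Fintype V]
  [deqV : DecidableEq V]
  [finF : Fintype F]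
  [deqF : DecidableEq F]
  /-- the reversal involution on darts; its orbits are the edges -/
  rev : D → D
  rev_invol : ∀ d, rev (rev d) = d
  rev_ne : ∀ d, rev d ≠ d
  /-- the rotation permutation π: orbits are the darts directed into a common vertex,
  in counterclockwise order -/
  next : D → D
  next_bij : Function.Bijective next
  /-- the head of a dart: the orbit map of `next` -/
  head : D → V
  head_next : ∀ d, head (next d) = head d
  head_orbit : ∀ d₁ d₂, head d₁ = head d₂ → ∃ n : ℕ, next^[n] d₁ = d₂
  head_surj : Function.Surjective head
  /-- the face to the left of a dart: the orbit map of `rev ∘ next` -/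
  left : D → F
  left_step : ∀ d, left (rev (next d)) = left d
  left_orbit : ∀ d₁ d₂, left d₁ = left d₂ → ∃ n : ℕ, (fun x => rev (next x))^[n] d₁ = d₂
  left_surj : Function.Surjective left
  /-- the genus -/
  g : ℕ
  /-- Euler's formula `|V| - |E| + |F| = 2 - 2g` (with `2|E| = |D|`) -/
  euler : 2 * (Fintype.card V : ℤ) + 2 * (Fintype.card F : ℤ) - (Fintype.card D : ℤ)
      = 4 - 4 * (g : ℤ)

attribute [instance] CombSurface.finD CombSurface.deqD CombSurface.finV
  CombSurface.deqV CombSurface.finF CombSurface.deqF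

namespace CombSurface

variable (S : CombSurface)

/-- The tail of a dart. -/
def tail (d : S.D) : S.V := S.head (S.rev d)

/-- The face to the right of a dart.  The dual dart of `d` crosses `d` from the face on
its left to the face on its right; i.e. the dual dart of `d` has tail `S.left d` and
head `S.right d`. -/
def right (d : S.D) : S.F := S.left (S.rev d)

/-- The imbalance of a flow `f` at a vertex `v`: the net flow into `v`. -/
def imbalance (f : S.D → ℝ) (v : S.V) : ℝ :=
  ∑ d ∈ univ.filter (fun d => S.head d = v), f d -
    ∑ d ∈ univ.filter (fun d => S.tail d = v), f d

/-- `f` is the boundary flow of the potential function `α` on the faces. -/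
def IsBoundary (f : S.D → ℝ) (α : S.F → ℝ) : Prop :=
  ∀ d, f d - f (S.rev d) = α (S.right d) - α (S.left d)

/-- The dual imbalance of a dual flow `z` at a face `p`: the sum of `z` over all darts
whose dual darts have head `p`. -/
def dualImbalance (z : S.D → ℝ) (p : S.F) : ℝ :=
  ∑ d ∈ univ.filter (fun d => S.right d = p), z d

/-- A drainage with sink `r`: an antisymmetric dual flow whose dual imbalance is negative
at every face other than `r`. -/
def IsDrainage (z : S.D → ℝ) (r : S.F) : Prop :=
  (∀ d, z (S.rev d) = - z d) ∧ ∀ q, q ≠ r → S.dualImbalance z q < 0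

/-- A set of darts closed under reversal (i.e. a set of edges). -/
def RevClosed (A : Finset S.D) : Prop := ∀ d ∈ A, S.rev d ∈ A

/-- The edge set `A` connects all vertices of the primal graph. -/
def PrimalConnected (A : Finset S.D) : Prop :=
  ∀ v w : S.V, Relation.ReflTransGen (fun a b => ∃ d ∈ A, S.tail d = a ∧ S.head d = b) v w

/-- The edge set `A` connects all vertices of the dual graph (i.e. the faces). -/
def DualConnected (A : Finset S.D) : Prop :=
  ∀ p q : S.F, Relation.ReflTransGen (fun a b => ∃ d ∈ A, S.left d = a ∧ S.right d = b) p q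

/-- A spanning tree of `G`: a connected spanning set of edges with `|V| - 1` edges. -/
def IsSpanningTree (A : Finset S.D) : Prop :=
  S.RevClosed A ∧ S.PrimalConnected A ∧ A.card = 2 * (Fintype.card S.V - 1)

/-- A spanning cotree of `G`: a set of edges forming a spanning tree of the dual graph. -/
def IsSpanningCotree (A : Finset S.D) : Prop :=
  S.RevClosed A ∧ S.DualConnected A ∧ A.card = 2 * (Fintype.card S.F - 1)

/-- The clockwise neighborhood `∂⁻(F')` of a set of faces: all darts whose dual darts
have tail outside `F'` and head inside `F'`. -/
def cwBoundary (F' : Finset S.F) : Finset S.D :=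
  univ.filter fun d => S.left d ∉ F' ∧ S.right d ∈ F'

end CombSurface

/-- A tree–cotree decomposition of `G`: a partition of the edges into a spanning tree `T`,
a spanning cotree `C`, and a set `L` of leftover edges. -/
structure TreeCotree (S : CombSurface) where
  T : Finset S.D
  L : Finset S.D
  C : Finset S.D
  tree : S.IsSpanningTree T
  cotree : S.IsSpanningCotree C
  revL : S.RevClosed L
  disjTL : Disjoint T L
  disjTC : Disjoint T C
  disjLC : Disjoint L C
  cover : T ∪ L ∪ C = Finset.univ

/-- Homology signature data: a tree–cotree decomposition `(T, L, C)` together with an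
ordering `ell 1, …, ell 2g` of (oriented) leftover edges of `L` and, for each `i`, the
oriented dual fundamental cycle `cyc i` of the edge of `ell i` with the cotree `C`,
represented as the `{-1,0,1}`-valued dual circulation supported on `C + ell i` that
traverses the dart `ell i` (positively).  The homology signature of a dart `d` is the
integer vector `[d] = fun i => cyc i d`. -/
structure HomologyBasis (S : CombSurface) extends TreeCotree S where
  /-- the `i`-th leftover edge, oriented -/
  ell : Fin (2 * S.g) → S.D
  ell_mem : ∀ i, ell i ∈ L
  ell_inj : ∀ i j, (ell i = ell j ∨ ell i = S.rev (ell j)) → i = j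
  ell_cover : ∀ d ∈ L, ∃ i, d = ell i ∨ d = S.rev (ell i)
  /-- the oriented dual fundamental cycle of `ell i` with the cotree `C`,
  as a dual circulation -/
  cyc : Fin (2 * S.g) → S.D → ℤ
  cyc_antisym : ∀ i d, cyc i (S.rev d) = - cyc i d
  cyc_le_one : ∀ i d, |cyc i d| ≤ 1
  cyc_circ : ∀ i p, (∑ d ∈ univ.filter (fun d => S.right d = p), cyc i d) = 0
  cyc_supp : ∀ i d, cyc i d ≠ 0 → d ∈ C ∨ d = ell i ∨ d = S.rev (ell i)
  cyc_ell : ∀ i, cyc i (ell i) = 1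

/-- The homology signature `[f]` of a flow `f`: `[f] = ∑ d, f d • [d]`. -/
def flowSig (S : CombSurface) (H : HomologyBasis S) (f : S.D → ℝ) : Fin (2 * S.g) → ℝ :=
  fun i => ∑ d, f d * (H.cyc i d : ℝ)

/-- Strict lexicographic comparison of cost vectors. -/
def lexLt {n : ℕ} (a b : Fin n → ℝ) : Prop :=
  ∃ i, (∀ j, j < i → a j = b j) ∧ a i < b i

/-- Lexicographic comparison of cost vectors. -/
def lexLe {n : ℕ} (a b : Fin n → ℝ) : Prop := lexLt a b ∨ a = b

/-- The perturbed cost of a dart under the full lexicographic perturbation scheme: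
`c'(d) = (c(d), 1) ++ [d] ++ (z(d))`. -/
def dartCostFull (S : CombSurface) (H : HomologyBasis S) (z : S.D → ℝ) (c : S.D → ℝ)
    (d : S.D) : Fin (2 * S.g + 3) → ℝ :=
  Fin.cons (c d) (Fin.cons 1 (Fin.snoc (fun i => (H.cyc i d : ℝ)) (z d)))

/-- The perturbed cost of a dart under the modified lexicographic perturbation scheme
(no `+1` component): `c'(d) = (c(d)) ++ [d] ++ (z(d))`. -/
def dartCostMod (S : CombSurface) (H : HomologyBasis S) (z : S.D → ℝ) (c : S.D → ℝ)
    (d : S.D) : Fin (2 * S.g + 2) → ℝ :=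
  Fin.cons (c d) (Fin.snoc (fun i => (H.cyc i d : ℝ)) (z d))

/-- The perturbed cost of a flow: `c'(f) = ∑ d, f d • c'(d)`. -/
def flowCostFull (S : CombSurface) (H : HomologyBasis S) (z : S.D → ℝ) (c : S.D → ℝ)
    (f : S.D → ℝ) : Fin (2 * S.g + 3) → ℝ :=
  ∑ d, f d • dartCostFull S H z c d

/-- The unperturbed part of a cost vector from the modified scheme (first component). -/
def basePart {g : ℕ} (w : Fin (2 * g + 2) → ℝ) : ℝ := w ⟨0, by omega⟩

/-- The homology part of a cost vector from the modified scheme (middle `2g` components). -/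
def homPart {g : ℕ} (w : Fin (2 * g + 2) → ℝ) : Fin (2 * g) → ℝ :=
  fun i => w ⟨(i : ℕ) + 1, by have := i.isLt; omega⟩

/-- The face part of a cost vector from the modified scheme (last component). -/
def facePart {g : ℕ} (w : Fin (2 * g + 2) → ℝ) : ℝ := w ⟨2 * g + 1, by omega⟩

/-- Feasibility of a flow with respect to dart capacities `μ` and vertex demands `b`. -/
def Feasible (S : CombSurface) (μ : S.D → ENNReal) (b : S.V → ℝ) (f : S.D → ℝ) : Prop :=
  (∀ d, 0 ≤ f d ∧ ENNReal.ofReal (f d) ≤ μ d) ∧ ∀ v, S.imbalance f v = b v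

/-- A minimum-cost feasible flow with respect to the perturbed costs `c'`, capacities `μ`,
and demands `b`, where costs are compared lexicographically. -/
def IsMinCostFlow (S : CombSurface) (H : HomologyBasis S) (z : S.D → ℝ) (c : S.D → ℝ)
    (μ : S.D → ENNReal) (b : S.V → ℝ) (f : S.D → ℝ) : Prop :=
  Feasible S μ b f ∧ ∀ f', Feasible S μ b f' →
    lexLe (flowCostFull S H z c f) (flowCostFull S H z c f')

/-- `IsWalk S s t P`: the list of darts `P` is a directed walk from `s` to `t`. -/
def IsWalk (S : CombSurface) : S.V → S.V → List S.D → Prop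
  | s, t, [] => s = t
  | s, t, d :: P => S.tail d = s ∧ IsWalk S (S.head d) t P

/-- `IsDualWalk S p q P`: the list of darts `P` is a directed walk from face `p` to face
`q` in the dual graph. -/
def IsDualWalk (S : CombSurface) : S.F → S.F → List S.D → Prop
  | p, q, [] => p = q
  | p, q, d :: P => S.left d = p ∧ IsDualWalk S (S.right d) q P

/-- The cost vector of a walk: the sum of the cost vectors of its darts. -/
def pathCost {n : ℕ} (S : CombSurface) (cp : S.D → Fin n → ℝ) (P : List S.D) :
    Fin n → ℝ :=
  (P.map cp).sum

/-- `P` is a lexicographically shortest directed walk from `s` to `t` with respect to the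
vector-valued dart costs `cp`. -/
def IsShortestWalk {n : ℕ} (S : CombSurface) (cp : S.D → Fin n → ℝ) (s t : S.V)
    (P : List S.D) : Prop :=
  IsWalk S s t P ∧ ∀ Q, IsWalk S s t Q → lexLe (pathCost S cp P) (pathCost S cp Q)

/-- A list of darts viewed as a flow: each dart receives the number of times it occurs. -/
def listFlow (S : CombSurface) (P : List S.D) : S.D → ℝ := fun d => (P.count d : ℝ)

/-- The parent map of a spanning cotree rooted at `r`, given the successor darts. -/
def parentOfSucc (S : CombSurface) (r : S.F) (succ : S.F → S.D) (p : S.F) : S.F :=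
  if p = r then r else S.right (succ p)

/-- The descendants of a face `p` in the cotree rooted at `r` (including `p` itself). -/
def descendants (S : CombSurface) (r : S.F) (succ : S.F → S.D) (p : S.F) :
    Finset S.F :=
  univ.filter fun o => ∃ m : ℕ, (parentOfSucc S r succ)^[m] o = p

/-- The dual flow sending one unit of flow from every face to `r` along the cotree:
on a successor dart `succ p` its value is the number of descendants of `p`, on the
reversal of a successor dart it is the negation of that number, and on darts whose edges
are not in the cotree it is `0`. -/
def treeDrainage (S : CombSurface) (r : S.F) (succ : S.F → S.D) (d : S.D) : ℝ :=
  if ∃ p, p ≠ r ∧ succ p = d then ((descendants S r succ (S.left d)).card : ℝ)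
  else if ∃ p, p ≠ r ∧ succ p = S.rev d then
    -((descendants S r succ (S.left (S.rev d))).card : ℝ)
  else 0

/-- `RedOf S pred v u x`: in the tree rooted at `v` with predecessor darts `pred`, the
tree path from `v` to `x` passes through `u` (when `pred u` is the dart `v→u`, this says
exactly that the tree path from `v` to `x` uses the dart `v→u`, i.e. `x` is red). -/
def RedOf (S : CombSurface) (pred : S.V → S.D) (v u x : S.V) : Prop :=
  ∃ m : ℕ, (fun y => if y = v then v else S.tail (pred y))^[m] x = u

/-- The darts of the tree determined by the predecessor darts `pred` (both orientations
of each tree edge). -/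
def predDarts (S : CombSurface) (pred : S.V → S.D) (v : S.V) : Set S.D :=
  {d | ∃ x, x ≠ v ∧ (pred x = d ∨ pred x = S.rev d)}

/-- A shortest path tree rooted at `v` with respect to vector-valued dart costs `cost`,
together with the (lexicographic) shortest path distances: every non-root vertex has a
tense predecessor dart, all darts have non-negative slack, and the predecessor darts form
a tree reaching back to the root. -/
structure SPTree (S : CombSurface) {n : ℕ} (cost : S.D → Fin n → ℝ) (v : S.V) where
  pred : S.V → S.D
  dist : S.V → Fin n → ℝ
  dist_root : dist v = 0
  pred_head : ∀ x, x ≠ v → S.head (pred x) = x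
  pred_tense : ∀ x, x ≠ v → dist x = dist (S.tail (pred x)) + cost (pred x)
  slack_nonneg : ∀ d, lexLe (dist (S.head d)) (dist (S.tail d) + cost d)
  reach : ∀ x, ∃ m : ℕ, (fun y => if y = v then v else S.tail (pred y))^[m] x = v

namespace SPTree

variable {S : CombSurface} {n : ℕ} {cost : S.D → Fin n → ℝ} {v : S.V}

/-- The slack of a dart: `slack(x→y) = dist(x) + cost(x→y) − dist(y)`. -/
def slack (T : SPTree S cost v) (d : S.D) : Fin n → ℝ :=
  T.dist (S.tail d) + cost d - T.dist (S.head d)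

/-- A vertex `x` is red if the tree path from the root `v` to `x` uses the dart `v→u`;
here `u` is the head of that dart. -/
def Red (T : SPTree S cost v) (u x : S.V) : Prop := RedOf S T.pred v u x

/-- A dart is active if its tail is blue and its head is red. -/
def Active (T : SPTree S cost v) (u : S.V) (d : S.D) : Prop :=
  ¬ T.Red u (S.tail d) ∧ T.Red u (S.head d)

/-- The darts of the shortest path tree (both orientations of each tree edge). -/
def treeDarts (T : SPTree S cost v) : Set S.D := predDarts S T.pred v

end SPTree

/-- `K` realizes the fundamental cycle of the dart `d` with the tree whose darts are
`TD`: the concatenation `d :: K` is a simple closed walk whose non-`d` darts all lie in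
the tree. -/
def IsFundCycleWalk (S : CombSurface) (TD : Set S.D) (d : S.D) (K : List S.D) : Prop :=
  IsWalk S (S.head d) (S.tail d) K ∧ (∀ e ∈ K, e ∈ TD) ∧ ((d :: K).map S.head).Nodup

/-- The homology signature of the fundamental cycle `d :: K`. -/
def cycleSig (S : CombSurface) (H : HomologyBasis S) (d : S.D) (K : List S.D) :
    Fin (2 * S.g) → ℝ :=
  fun i => (H.cyc i d : ℝ) + (K.map fun e => (H.cyc i e : ℝ)).sum

/-- `Y` is a subgraph of the cut graph `X` in which every incident dual vertex other than
`q` and `r` has degree at least 2. -/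
def IsCore (S : CombSurface) (X : Set S.D) (q r : S.F) (Y : Set S.D) : Prop :=
  Y ⊆ X ∧ (∀ d ∈ Y, S.rev d ∈ Y) ∧
    ∀ d ∈ Y, S.left d ≠ q → S.left d ≠ r → ∃ d' ∈ Y, d' ≠ d ∧ S.left d' = S.left d

/-- The 2-core of the cut graph `X` (keeping `q` and `r`): the largest subgraph in which
every dual vertex other than `q` and `r` has degree at least 2; equivalently, the result
of repeatedly deleting degree-1 dual vertices other than `q` and `r`. -/
def twoCore (S : CombSurface) (X : Set S.D) (q r : S.F) : Set S.D :=
  ⋃₀ {Y | IsCore S X q r Y}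

/-- An oriented cut path of the 2-core `X2`: a directed dual path whose darts lie in `X2`
and whose internal dual vertices are not `q` or `r` and have degree exactly 2 in `X2`. -/
def IsCutPath (S : CombSurface) (X2 : Set S.D) (q r : S.F) (P : List S.D) : Prop :=
  (∀ d ∈ P, d ∈ X2) ∧
    P.Chain' fun d₁ d₂ => S.right d₁ = S.left d₂ ∧ S.right d₁ ≠ q ∧ S.right d₁ ≠ r ∧
      ∀ e ∈ X2, S.left e = S.right d₁ → e = S.rev d₁ ∨ e = d₂

/-- `L` is the clockwise facial walk around the face `p` (cyclically closed). -/
def IsFacialCycle (S : CombSurface) (p : S.F) (L : List S.D) : Prop :=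
  L ≠ [] ∧ (∀ d ∈ L, S.left d = p) ∧
    List.Chain' (fun d₁ d₂ => d₂ = S.rev (S.next d₁)) (L ++ L.take 1)

/-- Elementary combinatorial homotopy moves in the surface punctured at the faces `o` and
`r`, where the first endpoint of a walk may additionally slide forward or backward along
the fixed walk `R` (the walk `u₁→u₂→⋯→u_{k-1}`): removal/insertion of a spur, exchanging
two arcs that together bound a face other than `o` and `r`, and sliding the initial
endpoint along `R`. -/
inductive RHStep (S : CombSurface) (o r : S.F) (R : List S.D) :
    List S.D → List S.D → Prop where
  | spur (P Q : List S.D) (d : S.D) :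
      RHStep S o r R (P ++ d :: S.rev d :: Q) (P ++ Q)
  | face (P Q A B : List S.D) (p : S.F) (hpo : p ≠ o) (hpr : p ≠ r)
      (hface : IsFacialCycle S p (A ++ (B.reverse.map S.rev))) :
      RHStep S o r R (P ++ A ++ Q) (P ++ B ++ Q)
  | slide (P : List S.D) (d : S.D) (hd : d ∈ R) :
      RHStep S o r R (d :: P) P

/-- Restricted homotopy of walks with respect to a dart whose left face is `o`: homotopy
in the surface punctured at `o` and `r`, where the first endpoint may move forward or
backward along the walk `R`. -/
def RHomotopic (S : CombSurface) (o r : S.F) (R : List S.D) (P₁ P₂ : List S.D) : Prop :=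
  Relation.EqvGen (RHStep S o r R) P₁ P₂



section generic
variable {α : Type*}

lemma iter_agree (g g' : α → α) (a : α) (hgg' : ∀ x, x ≠ a → g x = g' x) :
    ∀ (k : ℕ) (w : α), (∀ j < k, g^[j] w ≠ a) → g^[k] w = g'^[k] w := by
  intro k
  induction k with
  | zero => intro w _; rfl
  | succ n ih =>
    intro w hw
    rw [Function.iterate_succ_apply', Function.iterate_succ_apply',
      ← ih w (fun j hj => hw j (by omega)), hgg' _ (hw n (by omega))]

lemma iter_fixed (g : α → α) (v : α) (h : g v = v) : ∀ k, g^[k] v = v := by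
  intro k; induction k with
  | zero => rfl
  | succ n ih => rw [Function.iterate_succ_apply', ih, h]

lemma no_periodic (g : α → α) (v : α) (hv : g v = v) (x : α) (hx : x ≠ v)
    (hreach : ∃ m, g^[m] x = v) (k : ℕ) (hk : k ≠ 0) : g^[k] x ≠ x := by
  intro he
  obtain ⟨m, hm⟩ := hreach
  have hmul : ∀ t, g^[t * k] x = x := by
    intro t; induction t with
    | zero => simp
    | succ n ih =>
      have : (n + 1) * k = n * k + k := by ring
      rw [this, Function.iterate_add_apply, he, ih]
  have h1 : m * k + k = (m * k + k - m) + m := by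
    have : m ≤ m * k + k := by nlinarith [Nat.one_le_iff_ne_zero.mpr hk]
    omega
  have : g^[m * k + k] x = v := by
    rw [h1, Function.iterate_add_apply, hm, iter_fixed g v hv]
  rw [show m * k + k = (m+1) * k by ring, hmul (m+1)] at this
  exact hx this

lemma chi_count [DecidableEq α] (χ : α → ℝ) (p q : α) (hpq : p ≠ q)
    (hp : χ p = 1) (hq : χ q = -1) :
    ∀ W : List α, (∀ e ∈ W, e ≠ p → e ≠ q → χ e = 0) →
      (W.map χ).sum = (W.count p : ℝ) - (W.count q : ℝ) := by
  intro W
  induction W with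
  | nil => simp
  | cons a W ih =>
    intro h
    have hW := ih (fun e he => h e (List.mem_cons_of_mem a he))
    by_cases hap : a = p
    · subst hap
      simp [List.count_cons, hW, hpq, Ne.symm hpq, hp]
      ring
    · by_cases haq : a = q
      · subst haq
        simp [List.count_cons, hW, hap, hq]
        ring
      · have := h a List.mem_cons_self hap haq
        simp [List.count_cons, hW, Ne.symm hap, Ne.symm haq, hap, haq, this]

end generic

lemma exists_minimal {p : ℕ → Prop} (h : ∃ k, p k) : ∃ k, p k ∧ ∀ j < k, ¬ p j := by
  classical
  exact ⟨Nat.find h, Nat.find_spec h, fun j hj => Nat.find_min h hj⟩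

section surfaceaux

variable (S : CombSurface)

lemma aux_cross_sum (ind : S.V → ℝ) :
    ∀ (W : List S.D) (a b : S.V), IsWalk S a b W →
      (W.map (fun e => ind (S.head e) - ind (S.tail e))).sum = ind b - ind a := by
  intro W
  induction W with
  | nil =>
    intro a b h
    have : a = b := h
    subst this; simp
  | cons e W ih =>
    intro a b h
    obtain ⟨h1, h2⟩ := h
    have := ih (S.head e) b h2
    simp only [List.map_cons, List.sum_cons, this, h1]
    ring

lemma aux_map_sum_count (φ : S.D → ℝ) :
    ∀ W : List S.D, (W.map φ).sum = ∑ e : S.D, (W.count e : ℝ) * φ e := by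
  intro W
  induction W with
  | nil => simp
  | cons a W ih =>
    simp only [List.map_cons, List.sum_cons, ih, List.count_cons, beq_iff_eq]
    push_cast
    have h2 : ∀ x : S.D, ((W.count x : ℝ) + if a = x then (1:ℝ) else 0) * φ x
        = (W.count x : ℝ) * φ x + (if a = x then φ x else 0) := by
      intro x; split <;> ring
    simp only [h2, Finset.sum_add_distrib, Finset.sum_ite_eq, Finset.mem_univ, if_true]
    ring

lemma aux_half_bal (g : S.D → ℝ) (w : S.V) :
    ∑ e ∈ Finset.univ.filter (fun e => S.head e = w), (g e - g (S.rev e))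
      = S.imbalance g w := by
  unfold CombSurface.imbalance
  rw [Finset.sum_sub_distrib]
  congr 1
  have hinj : Function.Injective S.rev := Function.Involutive.injective S.rev_invol
  have him : ∑ x ∈ Finset.univ.filter (fun e => S.head e = w), g (S.rev x)
      = ∑ x ∈ (Finset.univ.filter (fun e => S.head e = w)).image S.rev, g x :=
    (Finset.sum_image (fun x _ y _ h => hinj h)).symm
  rw [him]
  congr 1
  ext e
  simp only [Finset.mem_image, Finset.mem_filter, Finset.mem_univ, true_and]
  constructor
  · rintro ⟨a, ha, rfl⟩
    show S.tail (S.rev a) = w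
    unfold CombSurface.tail
    rw [S.rev_invol]; exact ha
  · intro h
    exact ⟨S.rev e, h, S.rev_invol e⟩

lemma aux_imb_add (p q : S.D → ℝ) (w : S.V) :
    S.imbalance (fun e => p e + q e) w = S.imbalance p w + S.imbalance q w := by
  unfold CombSurface.imbalance
  rw [Finset.sum_add_distrib, Finset.sum_add_distrib]
  ring

lemma aux_imb_sub3 (p q r : S.D → ℝ) (w : S.V) :
    S.imbalance (fun e => p e - q e - r e) w
      = S.imbalance p w - S.imbalance q w - S.imbalance r w := by
  unfold CombSurface.imbalance
  rw [Finset.sum_sub_distrib, Finset.sum_sub_distrib, Finset.sum_sub_distrib,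
    Finset.sum_sub_distrib]
  ring

lemma aux_imb_delta (e : S.D) (w : S.V) :
    S.imbalance (fun x => if e = x then (1:ℝ) else 0) w
      = (if S.head e = w then (1:ℝ) else 0) - (if S.tail e = w then (1:ℝ) else 0) := by
  unfold CombSurface.imbalance
  rw [Finset.sum_ite_eq, Finset.sum_ite_eq]
  simp [Finset.mem_filter]

lemma aux_imb_walk :
    ∀ (W : List S.D) (a b : S.V), IsWalk S a b W → ∀ w,
      S.imbalance (listFlow S W) w
        = (if b = w then (1:ℝ) else 0) - (if a = w then (1:ℝ) else 0) := by
  intro W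
  induction W with
  | nil =>
    intro a b h w
    have : a = b := h
    subst this
    have : listFlow S [] = fun _ => (0:ℝ) := by funext e; simp [listFlow]
    rw [this]
    unfold CombSurface.imbalance
    simp
  | cons e W ih =>
    intro a b h w
    obtain ⟨h1, h2⟩ := h
    have hlf : listFlow S (e :: W) = fun x =>
        listFlow S W x + (if e = x then (1:ℝ) else 0) := by
      funext x
      simp only [listFlow, List.count_cons]
      split <;> push_cast <;> simp_all
    rw [hlf, aux_imb_add, aux_imb_delta, ih (S.head e) b h2 w, h1]
    ring

end surfaceaux

lemma aux_tree_circ (S : CombSurface) (pred : S.V → S.D) (v : S.V)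
    (hhead : ∀ x, x ≠ v → S.head (pred x) = x)
    (hreach : ∀ x, ∃ m, (fun y => if y = v then v else S.tail (pred y))^[m] x = v)
    (g : S.D → ℝ) (hanti : ∀ e, g (S.rev e) = - g e)
    (hbal : ∀ w, ∑ e ∈ Finset.univ.filter (fun e => S.head e = w), g e = 0)
    (hsupp : ∀ e, g e ≠ 0 → e ∈ predDarts S pred v) : ∀ e, g e = 0 := by
  set f : S.V → S.V := fun y => if y = v then v else S.tail (pred y) with hf
  have hfv : f v = v := by simp [hf]
  have hfx : ∀ x, x ≠ v → f x = S.tail (pred x) := by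
    intro x hx; simp [hf, hx]
  have hnoper : ∀ x, x ≠ v → ∀ k, k ≠ 0 → f^[k] x ≠ x := by
    intro x hx k hk
    exact no_periodic f v hfv x hx (hreach x) k hk
  have key : ∀ n : ℕ, ∀ x, x ≠ v →
      (Finset.univ.filter (fun w => ∃ k, f^[k] w = x)).card ≤ n → g (pred x) = 0 := by
    intro n
    induction n with
    | zero =>
      intro x hx hc
      exfalso
      have : x ∈ Finset.univ.filter (fun w => ∃ k, f^[k] w = x) := by
        simp only [Finset.mem_filter, Finset.mem_univ, true_and]
        exact ⟨0, rfl⟩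
      have := Finset.card_pos.mpr ⟨x, this⟩
      omega
    | succ n ih =>
      intro x hx hcard
      set C : Finset S.V := Finset.univ.filter (fun y => y ≠ v ∧ f y = x) with hC
      have hchild0 : ∀ y ∈ C, g (pred y) = 0 := by
        intro y hy
        rw [hC, Finset.mem_filter] at hy
        obtain ⟨-, hyv, hfy⟩ := hy
        apply ih y hyv
        have hss : Finset.univ.filter (fun w => ∃ k, f^[k] w = y)
            ⊂ Finset.univ.filter (fun w => ∃ k, f^[k] w = x) := by
          constructor
          · intro w hw
            rw [Finset.mem_filter] at hw ⊢
            obtain ⟨-, k, hk⟩ := hw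
            exact ⟨Finset.mem_univ w, k + 1, by
              rw [Function.iterate_succ_apply', hk, hfy]⟩
          · intro hsub
            have hxin : x ∈ Finset.univ.filter (fun w => ∃ k, f^[k] w = x) := by
              simp only [Finset.mem_filter, Finset.mem_univ, true_and]
              exact ⟨0, rfl⟩
            have := hsub hxin
            rw [Finset.mem_filter] at this
            obtain ⟨-, k, hk⟩ := this
            by_cases hxv : x = v
            · rw [hxv, iter_fixed f v hfv] at hk
              exact hyv hk.symm
            · exact hnoper x hxv (k+1) (by omega)
                (by rw [Function.iterate_succ_apply', hk, hfy])
        have := Finset.card_lt_card hss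
        omega
      set A : Finset S.D :=
        insert (pred x) (C.image (fun y => S.rev (pred y))) with hA
      have hAsub : A ⊆ Finset.univ.filter (fun e => S.head e = x) := by
        intro e he
        rw [hA, Finset.mem_insert] at he
        simp only [Finset.mem_filter, Finset.mem_univ, true_and]
        rcases he with rfl | he
        · exact hhead x hx
        · rw [Finset.mem_image] at he
          obtain ⟨y, hy, rfl⟩ := he
          rw [hC, Finset.mem_filter] at hy
          obtain ⟨-, hyv, hfy⟩ := hy
          show S.head (S.rev (pred y)) = x
          have ht : S.tail (pred y) = x := by rw [← hfx y hyv]; exact hfy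
          exact ht
      have hzero : ∀ e ∈ Finset.univ.filter (fun e => S.head e = x), e ∉ A → g e = 0 := by
        intro e he hea
        by_contra hg
        rw [Finset.mem_filter] at he
        obtain ⟨-, hhe⟩ := he
        obtain ⟨w, hwv, hcase⟩ := hsupp e hg
        rcases hcase with h1 | h2
        · have : w = x := by rw [← h1] at hhe; rw [← hhead w hwv]; exact hhe.symm ▸ rfl
          apply hea
          rw [hA, Finset.mem_insert]
          left; rw [← h1, this]
        · have he2 : e = S.rev (pred w) := by rw [h2, S.rev_invol]
          have hhw : S.head (S.rev (pred w)) = S.tail (pred w) := rfl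
          have : f w = x := by
            rw [hfx w hwv, ← hhw, ← he2]; exact hhe
          apply hea
          rw [hA, Finset.mem_insert]
          right
          rw [Finset.mem_image]
          exact ⟨w, by rw [hC, Finset.mem_filter]; exact ⟨Finset.mem_univ w, hwv, this⟩,
            he2.symm⟩
      have hsumA : ∑ e ∈ Finset.univ.filter (fun e => S.head e = x), g e
          = ∑ e ∈ A, g e := (Finset.sum_subset hAsub (fun e he hne => hzero e he hne)).symm
      have hpx_notin : pred x ∉ C.image (fun y => S.rev (pred y)) := by
        intro hmem
        rw [Finset.mem_image] at hmem
        obtain ⟨y, hy, hyeq⟩ := hmem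
        rw [hC, Finset.mem_filter] at hy
        obtain ⟨-, hyv, hfy⟩ := hy
        have h1 : f x = y := by
          rw [hfx x hx, ← hyeq]
          show S.head (S.rev (S.rev (pred y))) = y
          rw [S.rev_invol]
          exact hhead y hyv
        exact hnoper x hx 2 (by omega) (by
          show f (f x) = x
          rw [h1, hfy])
      have hinj : ∀ y ∈ C, ∀ y' ∈ C, S.rev (pred y) = S.rev (pred y') → y = y' := by
        intro y hy y' hy' heq
        rw [hC, Finset.mem_filter] at hy hy'
        have : pred y = pred y' := Function.Involutive.injective S.rev_invol heq
        rw [← hhead y hy.2.1, ← hhead y' hy'.2.1, this]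
      have hsum2 : ∑ e ∈ A, g e = g (pred x) + ∑ y ∈ C, g (S.rev (pred y)) := by
        rw [hA, Finset.sum_insert hpx_notin, Finset.sum_image hinj]
      have : g (pred x) + ∑ y ∈ C, g (S.rev (pred y)) = 0 := by
        rw [← hsum2, ← hsumA]; exact hbal x
      have hrw : ∑ y ∈ C, g (S.rev (pred y)) = 0 := by
        rw [Finset.sum_congr rfl (fun y hy => by rw [hanti, hchild0 y hy, neg_zero])]
        simp
      rw [hrw, add_zero] at this
      exact this
  intro e
  by_contra hne
  obtain ⟨w, hwv, hcase⟩ := hsupp e hne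
  have hw0 : g (pred w) = 0 :=
    key (Finset.univ.filter (fun y => ∃ k, f^[k] y = w)).card w hwv le_rfl
  rcases hcase with h1 | h2
  · exact hne (h1 ▸ hw0)
  · apply hne
    have : g e = - g (S.rev e) := by rw [← hanti, S.rev_invol]
    rw [this, ← h2, hw0, neg_zero]

/-- Lemma `change_homology` of the paper.  Suppose a pivot inserts the
tense active dart `d⁺` into the holiest shortest path tree `T` while removing the dart
`d⁻ = pred(head d⁺)` (the old predecessor of the head of `d⁺`), producing the new tree
`T − d⁻ + d⁺` whose predecessor map is `Function.update T.pred (head d⁺) d⁺`.  Let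
`d = x→y` be any dart such that `x` turns from red to blue during the pivot while `y`
does not change colors.  Then `[cycle(T − d⁻ + d⁺, d)] = [cycle(T, d)] + [cycle(T, d⁺)]`
(with the fundamental cycles realized by the simple closed walks `d :: K'`, `d :: K`, and
`d⁺ :: Kp` respectively). -/
theorem holiest_change_homology (S : CombSurface) (H : HomologyBasis S) (z : S.D → ℝ)
    (r : S.F) (hz : S.IsDrainage z r) (c : S.D → ℝ)
    (hpos : ∀ (w : S.V) (P : List S.D), P ≠ [] → IsWalk S w w P → 0 < (P.map c).sum)
    (duv : S.D) (hleft : S.left duv = r) (hne : S.head duv ≠ S.tail duv)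
    (lam : Fin (2 * S.g + 2) → ℝ)
    (T : SPTree S (fun d => if d = duv then lam else dartCostMod S H z c d)
      (S.tail duv))
    (hpredu : T.pred (S.head duv) = duv)
    (dplus : S.D) (hplus : T.Active (S.head duv) dplus)
    (htense : T.slack dplus = 0)
    (d : S.D)
    (hx_red : T.Red (S.head duv) (S.tail d))
    (hx_blue : ¬ RedOf S (Function.update T.pred (S.head dplus) dplus) (S.tail duv)
      (S.head duv) (S.tail d))
    (hy_same : T.Red (S.head duv) (S.head d) ↔
      RedOf S (Function.update T.pred (S.head dplus) dplus) (S.tail duv)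
        (S.head duv) (S.head d))
    (K Kp K' : List S.D)
    (hK : IsFundCycleWalk S T.treeDarts d K)
    (hKp : IsFundCycleWalk S T.treeDarts dplus Kp)
    (hK' : IsFundCycleWalk S
      (predDarts S (Function.update T.pred (S.head dplus) dplus) (S.tail duv)) d K') :
    cycleSig S H d K' = fun i => cycleSig S H d K i + cycleSig S H dplus Kp i := by
  classical
  obtain ⟨ht_nred, hyp_red⟩ := hplus
  set f : S.V → S.V := fun y => if y = S.tail duv then S.tail duv else S.tail (T.pred y) with hf
  set f' : S.V → S.V := fun y => if y = S.tail duv then S.tail duv else S.tail (Function.update T.pred (S.head dplus) dplus y) with hf'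
  have hRedT : ∀ x, T.Red (S.head duv) x ↔ ∃ m, f^[m] x = (S.head duv) := fun x => Iff.rfl
  have hRed' : ∀ x, RedOf S (Function.update T.pred (S.head dplus) dplus) (S.tail duv) (S.head duv) x ↔ ∃ m, f'^[m] x = (S.head duv) := fun x => Iff.rfl
  have huv : (S.head duv) ≠ (S.tail duv) := hne
  have hfvfix : f (S.tail duv) = (S.tail duv) := if_pos rfl
  have hf'vfix : f' (S.tail duv) = (S.tail duv) := if_pos rfl
  have hfx : ∀ w, w ≠ (S.tail duv) → f w = S.tail (T.pred w) := fun w hw => if_neg hw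
  have hf'x : ∀ w, w ≠ (S.tail duv) → f' w = S.tail ((Function.update T.pred (S.head dplus) dplus) w) := fun w hw => if_neg hw
  have hff' : ∀ w, w ≠ (S.head dplus) → f w = f' w := by
    intro w hw
    by_cases hwv : w = (S.tail duv)
    · rw [hwv, hfvfix, hf'vfix]
    · rw [hfx w hwv, hf'x w hwv, Function.update_of_ne hw]
  have hvblue : ¬ T.Red (S.head duv) (S.tail duv) := by
    intro h
    obtain ⟨m, hm⟩ := (hRedT (S.tail duv)).mp h
    rw [iter_fixed f (S.tail duv) hfvfix] at hm
    exact huv hm.symm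
  have hext : ∀ w k x, f^[k] x = w → T.Red (S.head duv) w → T.Red (S.head duv) x := by
    intro w k x hkx hw
    obtain ⟨m, hm⟩ := (hRedT w).mp hw
    exact (hRedT x).mpr ⟨m + k, by rw [Function.iterate_add_apply, hkx, hm]⟩
  have hyp_ne_v : (S.head dplus) ≠ (S.tail duv) := by
    intro h; rw [h] at hyp_red; exact hvblue hyp_red
  have hfu : f (S.head duv) = (S.tail duv) := by
    rw [hfx (S.head duv) huv, hpredu]
  have hf'yp : f' (S.head dplus) = (S.tail dplus) := by
    rw [hf'x (S.head dplus) hyp_ne_v, Function.update_self]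
  have hagree : ∀ w, (∀ j, f'^[j] w ≠ (S.head dplus)) → ∀ k, f'^[k] w = f^[k] w := by
    intro w hw k
    exact iter_agree f' f (S.head dplus) (fun x hx => (hff' x hx).symm) k w (fun j _ => hw j)
  have hSub_iff : ∀ w, (∃ k, f^[k] w = (S.head dplus)) ↔ (∃ k, f'^[k] w = (S.head dplus)) := by
    intro w
    constructor
    · intro h
      obtain ⟨k, hk, hmin⟩ := exists_minimal h
      refine ⟨k, ?_⟩
      have := iter_agree f f' (S.head dplus) (fun x hx => hff' x hx) k w hmin
      rw [← this]; exact hk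
    · intro h
      obtain ⟨k, hk, hmin⟩ := exists_minimal h
      refine ⟨k, ?_⟩
      have := iter_agree f' f (S.head dplus) (fun x hx => (hff' x hx).symm) k w hmin
      rw [← this]; exact hk
  have hSubF_red : ∀ w, (∃ k, f^[k] w = (S.head dplus)) → T.Red (S.head duv) w := by
    rintro w ⟨k, hk⟩; exact hext (S.head dplus) k w hk hyp_red
  have htp_nSubF : ¬ (∃ k, f^[k] (S.tail dplus) = (S.head dplus)) := fun h => ht_nred (hSubF_red (S.tail dplus) h)
  have htp_nSub : ¬ (∃ k, f'^[k] (S.tail dplus) = (S.head dplus)) := fun h => htp_nSubF ((hSub_iff (S.tail dplus)).mpr h)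
  have hxx_Sub : ∃ k, f'^[k] (S.tail d) = (S.head dplus) := by
    by_contra hns
    push_neg at hns
    obtain ⟨m, hm⟩ := (hRedT _).mp hx_red
    apply hx_blue
    exact (hRed' _).mpr ⟨m, by rw [hagree _ hns m]; exact hm⟩
  have hu_ne_yp : (S.head duv) ≠ (S.head dplus) := by
    intro h
    obtain ⟨k, hk⟩ := hxx_Sub
    exact hx_blue ((hRed' _).mpr ⟨k, by rw [hk]; exact h.symm⟩)
  have hyy_nSub : ¬ (∃ k, f'^[k] (S.head d) = (S.head dplus)) := by
    intro hS
    have hyred : T.Red (S.head duv) (S.head d) := hSubF_red _ ((hSub_iff _).mpr hS)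
    obtain ⟨m, hm⟩ := (hRed' _).mp (hy_same.mp hyred)
    obtain ⟨k, hk, hmin⟩ := exists_minimal hS
    have hagk : ∀ j, j ≤ k → f^[j] (S.head d) = f'^[j] (S.head d) := by
      intro j hj
      exact (iter_agree f' f (S.head dplus) (fun x hx => (hff' x hx).symm) j _
        (fun i hi => hmin i (lt_of_lt_of_le hi hj))).symm
    rcases lt_trichotomy m k with hmk | hmk | hmk
    · have hfm : f^[m] (S.head d) = (S.head duv) := by rw [hagk m (le_of_lt hmk)]; exact hm
      have h1 : f^[k] (S.head d) = f^[k - m] (S.head duv) := by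
        rw [← hfm, ← Function.iterate_add_apply]
        congr 1; omega
      have h2 : f^[k - m] (S.head duv) = (S.tail duv) := by
        have he : k - m = (k - m - 1) + 1 := by omega
        rw [he, Function.iterate_succ_apply, hfu, iter_fixed f (S.tail duv) hfvfix]
      have : (S.head dplus) = (S.tail duv) := by rw [← hk, ← hagk k le_rfl, h1, h2]
      exact hyp_ne_v this
    · apply hu_ne_yp; rw [← hm, hmk, hk]
    · have h1 : f'^[m] (S.head d) = f'^[m - k - 1] (S.tail dplus) := by
        have hstep : f'^[k+1] (S.head d) = (S.tail dplus) := by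
          rw [Function.iterate_succ_apply', hk, hf'yp]
        have h2 := Function.iterate_add_apply f' (m - k - 1) (k + 1) (S.head d)
        rw [hstep] at h2
        rw [show m - k - 1 + (k + 1) = m by omega] at h2
        exact h2
      have hnever : ∀ j, f'^[j] (S.tail dplus) ≠ (S.head dplus) := by
        intro j hj; exact htp_nSub ⟨j, hj⟩
      have h2 : f^[m - k - 1] (S.tail dplus) = (S.head duv) := by
        rw [← hagree (S.tail dplus) hnever (m - k - 1), ← h1]; exact hm
      exact ht_nred ((hRedT (S.tail dplus)).mpr ⟨m - k - 1, h2⟩)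
  have hyp_Sub : ∃ k, f'^[k] (S.head dplus) = (S.head dplus) := ⟨0, rfl⟩
  have hSub_step : ∀ w, w ≠ (S.head dplus) → (∃ k, f'^[k] w = (S.head dplus)) → ∃ k, f'^[k] (f' w) = (S.head dplus) := by
    intro w hw hS
    obtain ⟨k, hk, hmin⟩ := exists_minimal hS
    have hk0 : k ≠ 0 := by
      intro h0; rw [h0] at hk; exact hw hk
    refine ⟨k - 1, ?_⟩
    have he : k = (k - 1) + 1 := by omega
    rw [he, Function.iterate_succ_apply] at hk
    exact hk
  have hSub_step' : ∀ w, (∃ k, f'^[k] (f' w) = (S.head dplus)) → ∃ k, f'^[k] w = (S.head dplus) := by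
    rintro w ⟨k, hk⟩
    exact ⟨k + 1, by rw [Function.iterate_succ_apply]; exact hk⟩
  have hno1 : ∀ w, w ≠ S.tail duv → T.pred w ≠ dplus := by
    intro w hwv hpw
    have hwyp : w = S.head dplus := by
      rw [← T.pred_head w hwv, hpw]
    obtain ⟨m, hm⟩ := (hRedT (S.head dplus)).mp hyp_red
    rcases Nat.eq_zero_or_pos m with rfl | hmpos
    · exact hu_ne_yp hm.symm
    · have hfyp : f (S.head dplus) = S.tail dplus := by
        rw [hfx (S.head dplus) hyp_ne_v, ← hwyp, hpw]
      have hmt : f^[m-1] (S.tail dplus) = S.head duv := by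
        have hm1 : m = (m - 1) + 1 := by omega
        rw [hm1, Function.iterate_succ_apply, hfyp] at hm
        exact hm
      exact ht_nred ((hRedT (S.tail dplus)).mpr ⟨m - 1, hmt⟩)
  have hno2 : ∀ w, w ≠ S.tail duv → T.pred w ≠ S.rev dplus := by
    intro w hwv hpw
    have hwtp : w = S.tail dplus := by
      rw [← T.pred_head w hwv, hpw]; rfl
    have hftp : f (S.tail dplus) = S.head dplus := by
      rw [hfx (S.tail dplus) (hwtp ▸ hwv), ← hwtp, hpw]
      show S.head (S.rev (S.rev dplus)) = S.head dplus
      rw [S.rev_invol]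
    exact htp_nSubF ⟨1, hftp⟩
  have hdplus_nA : dplus ∉ predDarts S T.pred (S.tail duv) := by
    rintro ⟨w, hwv, hc | hc⟩
    · exact hno1 w hwv hc
    · exact hno2 w hwv hc
  have hrdplus_nA : S.rev dplus ∉ predDarts S T.pred (S.tail duv) := by
    rintro ⟨w, hwv, hc | hc⟩
    · exact hno2 w hwv hc
    · rw [S.rev_invol] at hc; exact hno1 w hwv hc
  have hK'mem : ∀ e, e ∈ predDarts S (Function.update T.pred (S.head dplus) dplus) (S.tail duv) →
      e ∈ predDarts S T.pred (S.tail duv) ∨ e = dplus ∨ e = S.rev dplus := by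
    rintro e ⟨w, hwv, hc⟩
    by_cases hwyp : w = S.head dplus
    · subst hwyp
      rw [Function.update_self] at hc
      rcases hc with rfl | hc
      · right; left; rfl
      · right; right; rw [hc, S.rev_invol]
    · rw [Function.update_of_ne hwyp] at hc
      exact Or.inl ⟨w, hwv, hc⟩
  have hArev : ∀ e, e ∈ predDarts S T.pred (S.tail duv) → S.rev e ∈ predDarts S T.pred (S.tail duv) := by
    rintro e ⟨w, hwv, hc | hc⟩
    · exact ⟨w, hwv, Or.inr (by rw [S.rev_invol]; exact hc)⟩
    · exact ⟨w, hwv, Or.inl hc⟩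
  -- the indicator of the pivot subtree
  set ind : S.V → ℝ := fun w => if (∃ k, f'^[k] w = S.head dplus) then 1 else 0 with hind
  have hind_yp : ind (S.head dplus) = 1 := if_pos hyp_Sub
  have hind_tp : ind (S.tail dplus) = 0 := if_neg htp_nSub
  have hind_x : ind (S.tail d) = 1 := if_pos hxx_Sub
  have hind_y : ind (S.head d) = 0 := if_neg hyy_nSub
  have hcross := aux_cross_sum S ind K' (S.head d) (S.tail d) hK'.1
  have hchi0 : ∀ e ∈ K', e ≠ dplus → e ≠ S.rev dplus →
      ind (S.head e) - ind (S.tail e) = 0 := by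
    intro e heK hep heq
    obtain ⟨w, hwv, hc⟩ := hK'.2.1 e heK
    have hmain : w ≠ S.head dplus ∧
        ((S.head e = w ∧ S.tail e = f' w) ∨ (S.head e = f' w ∧ S.tail e = w)) := by
      rcases hc with hc | hc
      · have hwne : w ≠ S.head dplus := by
          intro h; subst h; rw [Function.update_self] at hc; exact hep hc.symm
        rw [Function.update_of_ne hwne] at hc
        refine ⟨hwne, Or.inl ⟨?_, ?_⟩⟩
        · rw [← hc]; exact T.pred_head w hwv
        · rw [← hc, hf'x w hwv, Function.update_of_ne hwne]
      · have hwne : w ≠ S.head dplus := by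
          intro h; subst h; rw [Function.update_self] at hc
          apply heq; rw [hc, S.rev_invol]
        rw [Function.update_of_ne hwne] at hc
        have he : e = S.rev (T.pred w) := by rw [hc, S.rev_invol]
        refine ⟨hwne, Or.inr ⟨?_, ?_⟩⟩
        · rw [he]
          show S.tail (T.pred w) = f' w
          rw [hf'x w hwv, Function.update_of_ne hwne]
        · rw [he]
          show S.head (S.rev (S.rev (T.pred w))) = w
          rw [S.rev_invol]; exact T.pred_head w hwv
    obtain ⟨hwyp, hcase⟩ := hmain
    have hiff : ind w = ind (f' w) := by
      by_cases hsw : ∃ k, f'^[k] w = S.head dplus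
      · have e1 : ind w = 1 := if_pos hsw
        have e2 : ind (f' w) = 1 := if_pos (hSub_step w hwyp hsw)
        rw [e1, e2]
      · have e1 : ind w = 0 := if_neg hsw
        have e2 : ind (f' w) = 0 := if_neg (fun h => hsw (hSub_step' w h))
        rw [e1, e2]
    rcases hcase with ⟨h1, h2⟩ | ⟨h1, h2⟩
    · rw [h1, h2, hiff, sub_self]
    · rw [h1, h2, ← hiff, sub_self]
  have hKEY : (K'.count dplus : ℝ) - (K'.count (S.rev dplus) : ℝ) = 1 := by
    have hp1 : ind (S.head dplus) - ind (S.tail dplus) = 1 := by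
      rw [hind_yp, hind_tp]; norm_num
    have hq1 : ind (S.head (S.rev dplus)) - ind (S.tail (S.rev dplus)) = -1 := by
      have e1 : S.head (S.rev dplus) = S.tail dplus := rfl
      have e2 : S.tail (S.rev dplus) = S.head dplus := by
        show S.head (S.rev (S.rev dplus)) = S.head dplus
        rw [S.rev_invol]
      rw [e1, e2, hind_yp, hind_tp]; norm_num
    have hchi := chi_count (fun e => ind (S.head e) - ind (S.tail e)) dplus (S.rev dplus)
      (Ne.symm (S.rev_ne dplus)) hp1 hq1 K' hchi0
    rw [hchi, hind_x, hind_y] at hcross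
    linarith [hcross]
  -- counting infrastructure
  have hKsub : ∀ e ∈ K, e ∈ predDarts S T.pred (S.tail duv) := hK.2.1
  have hKpsub : ∀ e ∈ Kp, e ∈ predDarts S T.pred (S.tail duv) := hKp.2.1
  have hcnt : ∀ (L : List S.D) (e : S.D),
      (∀ x ∈ L, x ∈ predDarts S T.pred (S.tail duv)) →
      e ∉ predDarts S T.pred (S.tail duv) → L.count e = 0 := by
    intro L e hL he
    rw [List.count_eq_zero]
    intro hmem
    exact he (hL e hmem)
  have hcntK' : ∀ e, e ∉ predDarts S T.pred (S.tail duv) → e ≠ dplus →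
      e ≠ S.rev dplus → K'.count e = 0 := by
    intro e h1 h2 h3
    rw [List.count_eq_zero]
    intro hmem
    rcases hK'mem e (hK'.2.1 e hmem) with h | h | h
    exacts [h1 h, h2 h, h3 h]
  have hd_ne_dplus : d ≠ dplus := by
    intro h; rw [h] at hx_red; exact ht_nred hx_red
  have hcK_p : K.count dplus = 0 := hcnt K dplus hKsub hdplus_nA
  have hcK_rp : K.count (S.rev dplus) = 0 := hcnt K _ hKsub hrdplus_nA
  have hcKp_p : Kp.count dplus = 0 := hcnt Kp dplus hKpsub hdplus_nA
  have hcKp_rp : Kp.count (S.rev dplus) = 0 := hcnt Kp _ hKpsub hrdplus_nA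
  -- the difference flow
  set Hh : S.D → ℝ := fun e =>
    listFlow S (d :: K') e - listFlow S (d :: K) e - listFlow S (dplus :: Kp) e with hHh
  have hHhval : ∀ e, Hh e = ((d :: K').count e : ℝ) - ((d :: K).count e : ℝ)
      - ((dplus :: Kp).count e : ℝ) := fun e => rfl
  have hHH_dplus : Hh dplus - Hh (S.rev dplus) = 0 := by
    rw [hHhval, hHhval]
    simp only [List.count_cons, beq_iff_eq, hcK_p, hcK_rp, hcKp_p, hcKp_rp,
      if_neg (fun h : d = dplus => hd_ne_dplus h),
      if_pos (rfl : dplus = dplus),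
      if_neg (fun h : dplus = S.rev dplus => S.rev_ne dplus h.symm)]
    by_cases hrd : d = S.rev dplus
    · simp only [if_pos hrd]; push_cast; linarith [hKEY]
    · simp only [if_neg hrd]; push_cast; linarith [hKEY]
  have hHH_d : d ∉ predDarts S T.pred (S.tail duv) → Hh d - Hh (S.rev d) = 0 := by
    intro hdA
    have hrdA : S.rev d ∉ predDarts S T.pred (S.tail duv) := by
      intro h
      have := hArev _ h
      rw [S.rev_invol] at this
      exact hdA this
    have hcK_d : K.count d = 0 := hcnt K d hKsub hdA
    have hcK_rd : K.count (S.rev d) = 0 := hcnt K _ hKsub hrdA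
    have hcKp_d : Kp.count d = 0 := hcnt Kp d hKpsub hdA
    have hcKp_rd : Kp.count (S.rev d) = 0 := hcnt Kp _ hKpsub hrdA
    rw [hHhval, hHhval]
    simp only [List.count_cons, beq_iff_eq, hcK_d, hcK_rd, hcKp_d, hcKp_rd,
      if_pos (rfl : d = d),
      if_neg (fun h : dplus = d => hd_ne_dplus h.symm),
      if_neg (fun h : d = S.rev d => S.rev_ne d h.symm)]
    by_cases hdr : dplus = S.rev d
    · have hrpd : S.rev dplus = d := by rw [hdr, S.rev_invol]
      have hc1 : K'.count d = K'.count (S.rev dplus) := by rw [hrpd]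
      have hc2 : K'.count (S.rev d) = K'.count dplus := by rw [hdr]
      simp only [if_pos hdr, hc1, hc2]
      push_cast
      linarith [hKEY]
    · have hc1 : K'.count d = 0 := by
        apply hcntK' d hdA hd_ne_dplus
        intro h
        apply hdr
        rw [h, S.rev_invol]
      have hc2 : K'.count (S.rev d) = 0 := by
        apply hcntK' (S.rev d) hrdA
        · intro h; exact hdr h.symm
        · intro h
          exact hd_ne_dplus (Function.Involutive.injective S.rev_invol h)
      simp only [if_neg hdr, hc1, hc2]
      push_cast
      ring
  -- closed walk balance
  have hw3 : IsWalk S (S.tail d) (S.tail d) (d :: K') := ⟨rfl, hK'.1⟩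
  have hw1 : IsWalk S (S.tail d) (S.tail d) (d :: K) := ⟨rfl, hK.1⟩
  have hw2 : IsWalk S (S.tail dplus) (S.tail dplus) (dplus :: Kp) := ⟨rfl, hKp.1⟩
  have hbalHh : ∀ w, S.imbalance Hh w = 0 := by
    intro w
    have h3 := aux_imb_walk S (d :: K') _ _ hw3 w
    have h1 := aux_imb_walk S (d :: K) _ _ hw1 w
    have h2 := aux_imb_walk S (dplus :: Kp) _ _ hw2 w
    have hs := aux_imb_sub3 S (listFlow S (d :: K')) (listFlow S (d :: K))
      (listFlow S (dplus :: Kp)) w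
    rw [h1, h2, h3] at hs
    calc S.imbalance Hh w
        = S.imbalance (fun e => listFlow S (d :: K') e - listFlow S (d :: K) e
            - listFlow S (dplus :: Kp) e) w := rfl
      _ = 0 := by rw [hs]; ring
  -- the antisymmetrized flow is a tree circulation, hence zero
  have hHH0 : ∀ e, Hh e - Hh (S.rev e) = 0 := by
    have := aux_tree_circ S T.pred (S.tail duv) T.pred_head T.reach
      (fun e => Hh e - Hh (S.rev e)) ?anti ?bal ?supp
    · exact this
    case anti =>
      intro e
      show Hh (S.rev e) - Hh (S.rev (S.rev e)) = -(Hh e - Hh (S.rev e))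
      rw [S.rev_invol]
      ring
    case bal =>
      intro w
      show ∑ e ∈ Finset.univ.filter (fun e => S.head e = w), (Hh e - Hh (S.rev e)) = 0
      rw [aux_half_bal S Hh w]
      exact hbalHh w
    case supp =>
      intro e hHHe
      have hHq : ∀ zz : S.D, Hh zz ≠ 0 → zz ∈ predDarts S T.pred (S.tail duv) ∨
          zz = d ∨ zz = S.rev d ∨ zz = dplus ∨ zz = S.rev dplus := by
        intro zz hzz
        have hmem : zz ∈ (d :: K') ∨ zz ∈ (d :: K) ∨ zz ∈ (dplus :: Kp) := by
          by_contra hcon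
          push_neg at hcon
          obtain ⟨h1, h2, h3⟩ := hcon
          apply hzz
          rw [hHhval, List.count_eq_zero.mpr h1, List.count_eq_zero.mpr h2,
            List.count_eq_zero.mpr h3]
          norm_num
        rcases hmem with h | h | h
        · rcases List.mem_cons.mp h with rfl | h
          · right; left; rfl
          · rcases hK'mem zz (hK'.2.1 zz h) with h | h | h
            · left; exact h
            · right; right; right; left; exact h
            · right; right; right; right; exact h
        · rcases List.mem_cons.mp h with rfl | h
          · right; left; rfl
          · left; exact hKsub zz h
        · rcases List.mem_cons.mp h with rfl | h
          · right; right; right; left; rfl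
          · left; exact hKpsub zz h
      have hQe : e ∈ predDarts S T.pred (S.tail duv) ∨
          e = d ∨ e = S.rev d ∨ e = dplus ∨ e = S.rev dplus := by
        have hor : Hh e ≠ 0 ∨ Hh (S.rev e) ≠ 0 := by
          by_contra hcon
          push_neg at hcon
          apply hHHe
          show Hh e - Hh (S.rev e) = 0
          rw [hcon.1, hcon.2, sub_zero]
        rcases hor with h | h
        · exact hHq e h
        · rcases hHq _ h with h | h | h | h | h
          · left
            have := hArev _ h
            rw [S.rev_invol] at this
            exact this
          · right; right; left; rw [← h, S.rev_invol]
          · right; left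
            have h2 : S.rev (S.rev e) = S.rev (S.rev d) := by rw [h]
            rwa [S.rev_invol, S.rev_invol] at h2
          · right; right; right; right; rw [← h, S.rev_invol]
          · right; right; right; left
            have h2 : S.rev (S.rev e) = S.rev (S.rev dplus) := by rw [h]
            rwa [S.rev_invol, S.rev_invol] at h2
      rcases hQe with h | he | he | he | he
      · exact h
      · by_cases hdA : d ∈ predDarts S T.pred (S.tail duv)
        · rw [he]; exact hdA
        · exfalso
          apply hHHe
          show Hh e - Hh (S.rev e) = 0
          rw [he]
          exact hHH_d hdA
      · by_cases hdA : d ∈ predDarts S T.pred (S.tail duv)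
        · rw [he]; exact hArev d hdA
        · exfalso
          apply hHHe
          show Hh e - Hh (S.rev e) = 0
          rw [he, S.rev_invol]
          have h0 := hHH_d hdA
          linarith [h0]
      · exfalso
        apply hHHe
        show Hh e - Hh (S.rev e) = 0
        rw [he]
        exact hHH_dplus
      · exfalso
        apply hHHe
        show Hh e - Hh (S.rev e) = 0
        rw [he, S.rev_invol]
        linarith [hHH_dplus]
  have hsym : ∀ e, Hh e = Hh (S.rev e) := by
    intro e
    have := hHH0 e
    linarith [this]
  -- final homology computation
  funext i
  show cycleSig S H d K' i = cycleSig S H d K i + cycleSig S H dplus Kp i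
  have hexp : ∀ (dd : S.D) (W : List S.D), cycleSig S H dd W i
      = ∑ e : S.D, ((dd :: W).count e : ℝ) * (H.cyc i e : ℝ) := by
    intro dd W
    show ((H.cyc i dd : ℝ)) + (W.map fun e => (H.cyc i e : ℝ)).sum = _
    have hmc := aux_map_sum_count S (fun e => (H.cyc i e : ℝ)) (dd :: W)
    simp only [List.map_cons, List.sum_cons] at hmc
    exact hmc
  rw [hexp d K', hexp d K, hexp dplus Kp]
  have hσ : ∑ e : S.D, Hh e * (H.cyc i e : ℝ) = 0 := by
    have hrevsum : ∑ e : S.D, Hh e * (H.cyc i e : ℝ)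
        = ∑ e : S.D, Hh (S.rev e) * (H.cyc i (S.rev e) : ℝ) := by
      apply Fintype.sum_bijective S.rev (Function.Involutive.bijective S.rev_invol)
      intro x
      rw [S.rev_invol]
    have hneg : ∀ e : S.D, Hh (S.rev e) * (H.cyc i (S.rev e) : ℝ)
        = -(Hh e * (H.cyc i e : ℝ)) := by
      intro e
      rw [← hsym e, H.cyc_antisym]
      push_cast
      ring
    have h2 : ∑ e : S.D, Hh e * (H.cyc i e : ℝ)
        = - ∑ e : S.D, Hh e * (H.cyc i e : ℝ) := by
      calc ∑ e : S.D, Hh e * (H.cyc i e : ℝ)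
          = ∑ e : S.D, Hh (S.rev e) * (H.cyc i (S.rev e) : ℝ) := hrevsum
        _ = ∑ e : S.D, -(Hh e * (H.cyc i e : ℝ)) :=
            Finset.sum_congr rfl (fun e _ => hneg e)
        _ = - ∑ e : S.D, Hh e * (H.cyc i e : ℝ) := by
            rw [Finset.sum_neg_distrib]
    linarith [h2]
  have hsplit : ∑ e : S.D, Hh e * (H.cyc i e : ℝ)
      = ∑ e : S.D, ((d :: K').count e : ℝ) * (H.cyc i e : ℝ)
        - ∑ e : S.D, ((d :: K).count e : ℝ) * (H.cyc i e : ℝ)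
        - ∑ e : S.D, ((dplus :: Kp).count e : ℝ) * (H.cyc i e : ℝ) := by
    rw [← Finset.sum_sub_distrib, ← Finset.sum_sub_distrib]
    apply Finset.sum_congr rfl
    intro e _
    rw [hHhval]
    ring
  linarith [hσ, hsplit]
end
end

section
/- Fix an oriented cut path ξ of the 2-core of the cut graph X complementary to the holiest shortest path tree T, and let d₁ and d₂ be darts of ξ. Then the fundamental cycles cycle(T, d₁) and cycle(T, d₂) are homologous; in particular their homology signatures are equal. -/
/-!
Common combinatorial framework for graphs cellularly embedded on orientable surfaces,
following Erickson, Fox, and Lkhamsuren, "Holiest Minimum-Cost Paths and Flows in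
Surface Graphs".

A graph `G = (V, E, F)` embedded on an orientable surface is given combinatorially by a
finite set of darts together with a fixed-point-free involution `rev` (whose orbits are
the edges) and a permutation `next` (= π, whose orbits are the vertices); the faces are
the orbits of `rev ∘ next`, and the genus `g` is determined by Euler's formula
`|V| - |E| + |F| = 2 - 2g`.
-/

noncomputable section

open Finset

open scoped Classical

set_option maxHeartbeats 1000000

open scoped RealInnerProductSpace

namespace HolAux

lemma right_rev (S : CombSurface) (d : S.D) : S.right (S.rev d) = S.left d := by
  show S.left (S.rev (S.rev d)) = S.left d
  rw [S.rev_invol]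

lemma left_rev (S : CombSurface) (d : S.D) : S.left (S.rev d) = S.right d := rfl

lemma tail_rev (S : CombSurface) (d : S.D) : S.tail (S.rev d) = S.head d := by
  show S.head (S.rev (S.rev d)) = S.head d
  rw [S.rev_invol]

lemma head_rev (S : CombSurface) (d : S.D) : S.head (S.rev d) = S.tail d := rfl

/-- An antisymmetric dual circulation. -/
def DualCirc (S : CombSurface) (η : S.D → ℝ) : Prop :=
  (∀ d, η (S.rev d) = - η d) ∧
    ∀ p, ∑ e ∈ univ.filter (fun e => S.left e = p), η e = 0

/-- Reindexing a face-star sum by reversal. -/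
lemma sum_right_eq_sum_left_rev (S : CombSurface) (η : S.D → ℝ) (p : S.F) :
    ∑ e ∈ univ.filter (fun e => S.right e = p), η e
      = ∑ e ∈ univ.filter (fun e => S.left e = p), η (S.rev e) := by
  refine Finset.sum_nbij' (i := S.rev) (j := S.rev) ?_ ?_ ?_ ?_ ?_
  · intro a ha
    simp only [mem_filter, mem_univ, true_and] at ha ⊢
    rw [left_rev]; exact ha
  · intro a ha
    simp only [mem_filter, mem_univ, true_and] at ha ⊢
    rw [right_rev]; exact ha
  · intro a _; exact S.rev_invol a
  · intro a _; exact S.rev_invol a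
  · intro a _; rw [S.rev_invol]

lemma sum_left_of_antisym (S : CombSurface) (η : S.D → ℝ)
    (hanti : ∀ d, η (S.rev d) = - η d) (p : S.F) :
    ∑ e ∈ univ.filter (fun e => S.left e = p), η e
      = - ∑ e ∈ univ.filter (fun e => S.right e = p), η e := by
  rw [sum_right_eq_sum_left_rev S η p, ← Finset.sum_neg_distrib]
  apply Finset.sum_congr rfl
  intro e _
  rw [hanti e]; ring

/-- Each `cyc i` is an antisymmetric dual circulation (as a real-valued function). -/
lemma cyc_dualCirc (S : CombSurface) (H : HomologyBasis S) (i : Fin (2 * S.g)) :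
    DualCirc S (fun d => (H.cyc i d : ℝ)) := by
  have hanti : ∀ d, ((H.cyc i (S.rev d) : ℤ) : ℝ) = -((H.cyc i d : ℤ) : ℝ) := by
    intro d; rw [H.cyc_antisym]; push_cast; ring
  constructor
  · intro d; exact hanti d
  · intro p
    have h2 := sum_left_of_antisym S (fun d => (H.cyc i d : ℝ)) hanti p
    rw [h2]
    have h1 : ∑ e ∈ univ.filter (fun e => S.right e = p), ((H.cyc i e : ℝ))
        = ((∑ e ∈ univ.filter (fun e => S.right e = p), H.cyc i e : ℤ) : ℝ) := by
      push_cast; rfl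
    rw [h1, H.cyc_circ i p]
    simp

/-- Reindexing a face-star sum by the facial successor `rev ∘ next`:
summing a function of the head equals summing it of the tail. -/
lemma sum_head_eq_sum_tail (S : CombSurface) (g : S.V → ℝ) (p : S.F) :
    ∑ e ∈ univ.filter (fun e => S.left e = p), g (S.head e)
      = ∑ e ∈ univ.filter (fun e => S.left e = p), g (S.tail e) := by
  set ν : S.D ≃ S.D := Equiv.ofBijective S.next S.next_bij with hν
  have hνap : ∀ d, ν d = S.next d := fun d => rfl
  refine Finset.sum_nbij' (i := fun e => S.rev (S.next e))
    (j := fun e => ν.symm (S.rev e)) ?_ ?_ ?_ ?_ ?_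
  · intro a ha
    simp only [mem_filter, mem_univ, true_and] at ha ⊢
    rw [S.left_step]; exact ha
  · intro a ha
    simp only [mem_filter, mem_univ, true_and] at ha ⊢
    have h : S.rev (S.next (ν.symm (S.rev a))) = a := by
      rw [← hνap, ν.apply_symm_apply, S.rev_invol]
    calc S.left (ν.symm (S.rev a)) = S.left (S.rev (S.next (ν.symm (S.rev a)))) :=
          (S.left_step _).symm
      _ = p := by rw [h]; exact ha
  · intro a _
    show ν.symm (S.rev (S.rev (S.next a))) = a
    rw [S.rev_invol, ← hνap, ν.symm_apply_apply]
  · intro a _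
    show S.rev (S.next (ν.symm (S.rev a))) = a
    rw [← hνap, ν.apply_symm_apply, S.rev_invol]
  · intro a _
    show g (S.head a) = g (S.tail (S.rev (S.next a)))
    rw [tail_rev, S.head_next]

section Tree

variable {S : CombSurface} {n : ℕ} {cost : S.D → Fin n → ℝ} {v : S.V}

/-- The parent map of the shortest path tree. -/
def par (T : SPTree S cost v) (y : S.V) : S.V :=
  if y = v then v else S.tail (T.pred y)

/-- Depth of a vertex in the tree. -/
def depth (T : SPTree S cost v) (x : S.V) : ℕ := Nat.find (T.reach x)

lemma depth_spec (T : SPTree S cost v) (x : S.V) : (par T)^[depth T x] x = v :=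
  Nat.find_spec (T.reach x)

lemma depth_root (T : SPTree S cost v) : depth T v = 0 := by
  have h : (fun y => if y = v then v else S.tail (T.pred y))^[0] v = v := rfl
  exact Nat.le_zero.mp (Nat.find_le h)

lemma depth_step (T : SPTree S cost v) {x : S.V} (hx : x ≠ v) :
    depth T x = depth T (par T x) + 1 := by
  have h0 : depth T x ≠ 0 := by
    intro h
    have h2 := depth_spec T x
    rw [h] at h2
    exact hx h2
  obtain ⟨k, hk⟩ := Nat.exists_eq_succ_of_ne_zero h0
  have hspec := depth_spec T x
  rw [hk, Function.iterate_succ_apply] at hspec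
  have hle : depth T (par T x) ≤ k := Nat.find_le hspec
  have hge : depth T x ≤ depth T (par T x) + 1 := by
    apply Nat.find_le
    show (par T)^[depth T (par T x) + 1] x = v
    rw [Function.iterate_succ_apply]
    exact depth_spec T (par T x)
  omega

/-- Auxiliary iterated sum of `η` along the tree path towards the root. -/
def psiAux (T : SPTree S cost v) (η : S.D → ℝ) : ℕ → S.V → ℝ
  | 0, _ => 0
  | (k+1), y => if y = v then 0 else η (T.pred y) + psiAux T η k (par T y)

/-- The potential of `η` along the tree. -/
def psi (T : SPTree S cost v) (η : S.D → ℝ) (x : S.V) : ℝ :=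
  psiAux T η (depth T x) x

lemma psi_root (T : SPTree S cost v) (η : S.D → ℝ) : psi T η v = 0 := by
  unfold psi
  rw [depth_root]
  rfl

lemma psi_step (T : SPTree S cost v) (η : S.D → ℝ) {x : S.V} (hx : x ≠ v) :
    psi T η x = η (T.pred x) + psi T η (par T x) := by
  unfold psi
  rw [depth_step T hx]
  show (if x = v then 0 else η (T.pred x) + psiAux T η (depth T (par T x)) (par T x)) = _
  rw [if_neg hx]

/-- On tree darts, `η` is the difference of the potential. -/
lemma eta_treeDart (T : SPTree S cost v) (η : S.D → ℝ)
    (hanti : ∀ d, η (S.rev d) = - η d) {d : S.D} (hd : d ∈ T.treeDarts) :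
    η d = psi T η (S.head d) - psi T η (S.tail d) := by
  obtain ⟨x, hx, hpx⟩ := hd
  rcases hpx with h | h
  · have hhead : S.head d = x := by rw [← h]; exact T.pred_head x hx
    have htail : S.tail d = par T x := by
      unfold par
      rw [if_neg hx, ← h]
    rw [hhead, htail, psi_step T η hx, h]
    ring
  · have hhead : S.tail d = x := by
      rw [← head_rev S d, ← h]
      exact T.pred_head x hx
    have htail : S.head d = par T x := by
      unfold par
      rw [if_neg hx, h, tail_rev]
    have hstep := psi_step T η hx
    rw [h, hanti d] at hstep
    rw [hhead, htail]
    linarith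

/-- Sum of `η` along a tree walk telescopes. -/
lemma walk_sum (T : SPTree S cost v) (η : S.D → ℝ)
    (hanti : ∀ d, η (S.rev d) = - η d) :
    ∀ (Q : List S.D) (a b : S.V), IsWalk S a b Q → (∀ e ∈ Q, e ∈ T.treeDarts) →
      (Q.map η).sum = psi T η b - psi T η a := by
  intro Q
  induction Q with
  | nil =>
    intro a b hw _
    have : a = b := hw
    simp [this]
  | cons d P ih =>
    intro a b hw hmem
    obtain ⟨hta, hw'⟩ := hw
    have hd : d ∈ T.treeDarts := hmem d List.mem_cons_self
    have hrest := ih (S.head d) b hw' (fun e he => hmem e (List.mem_cons_of_mem _ he))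
    have hdart := eta_treeDart T η hanti hd
    simp only [List.map_cons, List.sum_cons]
    rw [hrest, hdart, hta]
    ring

/-- The key quantity: the pairing of the fundamental cycle of `d` with `η`. -/
def Phi (T : SPTree S cost v) (η : S.D → ℝ) (d : S.D) : ℝ :=
  η d + psi T η (S.tail d) - psi T η (S.head d)

lemma Phi_antisym (T : SPTree S cost v) (η : S.D → ℝ)
    (hanti : ∀ d, η (S.rev d) = - η d) (d : S.D) :
    Phi T η (S.rev d) = - Phi T η d := by
  unfold Phi
  rw [hanti d, tail_rev, head_rev]
  ring

lemma Phi_treeDart (T : SPTree S cost v) (η : S.D → ℝ)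
    (hanti : ∀ d, η (S.rev d) = - η d) {d : S.D} (hd : d ∈ T.treeDarts) :
    Phi T η d = 0 := by
  unfold Phi
  rw [eta_treeDart T η hanti hd]
  ring

/-- `Phi` is supported off the tree. -/
lemma Phi_supp_nontree (T : SPTree S cost v) (η : S.D → ℝ)
    (hanti : ∀ d, η (S.rev d) = - η d) {d : S.D} (hd : Phi T η d ≠ 0) :
    d ∉ T.treeDarts := fun h => hd (Phi_treeDart T η hanti h)

/-- The face-star sums of `Phi` all vanish. -/
lemma Phi_facesum (T : SPTree S cost v) (η : S.D → ℝ) (hη : DualCirc S η) (p : S.F) :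
    ∑ e ∈ univ.filter (fun e => S.left e = p), Phi T η e = 0 := by
  have h1 := hη.2 p
  have h2 := sum_head_eq_sum_tail S (psi T η) p
  unfold Phi
  rw [Finset.sum_sub_distrib, Finset.sum_add_distrib, h1, ← h2]
  ring

/-- The fundamental cycle sum equals `Phi`. -/
lemma fundcycle_sum (T : SPTree S cost v) (η : S.D → ℝ)
    (hanti : ∀ d, η (S.rev d) = - η d) {d : S.D} {K : List S.D}
    (hK : IsFundCycleWalk S T.treeDarts d K) :
    ((d :: K).map η).sum = Phi T η d := by
  obtain ⟨hw, hmem, -⟩ := hK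
  simp only [List.map_cons, List.sum_cons]
  rw [walk_sum T η hanti K (S.head d) (S.tail d) hw hmem]
  unfold Phi
  ring

end Tree

lemma twoCore_subset (S : CombSurface) (X : Set S.D) (q r : S.F) :
    twoCore S X q r ⊆ X := by
  intro d hd
  obtain ⟨Y, hY, hdY⟩ := hd
  exact hY.1 hdY

lemma twoCore_isCore (S : CombSurface) (X : Set S.D) (q r : S.F) :
    IsCore S X q r (twoCore S X q r) := by
  refine ⟨twoCore_subset S X q r, ?_, ?_⟩
  · intro d hd
    obtain ⟨Y, hY, hdY⟩ := hd
    exact ⟨Y, hY, hY.2.1 d hdY⟩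
  · intro d hd hq hr
    obtain ⟨Y, hY, hdY⟩ := hd
    obtain ⟨d', hd', hne, hleft⟩ := hY.2.2 d hdY hq hr
    exact ⟨d', ⟨Y, hY, hd'⟩, hne, hleft⟩

section Tree2

variable {S : CombSurface} {n : ℕ} {cost : S.D → Fin n → ℝ} {v : S.V}

/-- The support of `Phi` lies in the 2-core of the complement of the tree. -/
lemma Phi_supp_twoCore (T : SPTree S cost v) (η : S.D → ℝ) (hη : DualCirc S η)
    (q r : S.F) {d : S.D} (hd : Phi T η d ≠ 0) :
    d ∈ twoCore S {e | e ∉ T.treeDarts} q r := by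
  set X : Set S.D := {e | e ∉ T.treeDarts} with hX
  set Y : Set S.D := twoCore S X q r ∪ {e | Phi T η e ≠ 0} with hYdef
  have hcore : IsCore S X q r Y := by
    refine ⟨?_, ?_, ?_⟩
    · intro e he
      rcases he with he | he
      · exact twoCore_subset S X q r he
      · exact Phi_supp_nontree T η hη.1 he
    · intro e he
      rcases he with he | he
      · exact Or.inl ((twoCore_isCore S X q r).2.1 e he)
      · refine Or.inr ?_
        show Phi T η (S.rev e) ≠ 0
        rw [Phi_antisym T η hη.1]
        simpa using he
    · intro e he hq hr
      rcases he with he | he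
      · obtain ⟨d', hd', hne, hleft⟩ := (twoCore_isCore S X q r).2.2 e he hq hr
        exact ⟨d', Or.inl hd', hne, hleft⟩
      · have hsum := Phi_facesum T η hη (S.left e)
        by_contra hcon
        push_neg at hcon
        have hzero : ∀ e' ∈ univ.filter (fun e' => S.left e' = S.left e),
            e' ≠ e → Phi T η e' = 0 := by
          intro e' he' hne
          by_contra hP
          have hleft' : S.left e' = S.left e := by
            simpa using he'
          exact (hcon e' (Or.inr hP) hne) hleft'
        have hmem : e ∈ univ.filter (fun e' => S.left e' = S.left e) := by simp
        have := Finset.sum_eq_single_of_mem e hmem hzero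
        rw [this] at hsum
        exact he hsum
  exact Set.subset_sUnion_of_mem hcore (Or.inr hd)

end Tree2

lemma chain_const {α β : Type*} (g : α → β) (R : α → α → Prop)
    (hR : ∀ a b, R a b → g b = g a) :
    ∀ (d : α) (P : List α), List.Chain R d P → ∀ y ∈ P, g y = g d := by
  intro d P
  induction P generalizing d with
  | nil => intro _ y hy; cases hy
  | cons e P' ih =>
    intro hc y hy
    rcases List.chain_cons.mp hc with ⟨hde, hc'⟩
    rcases List.mem_cons.mp hy with rfl | hy'
    · exact hR _ _ hde
    · rw [ih e hc' y hy', hR _ _ hde]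

lemma chain'_const {α β : Type*} (g : α → β) (R : α → α → Prop)
    (hR : ∀ a b, R a b → g b = g a) (P : List α) (hc : List.Chain' R P) :
    ∀ x ∈ P, ∀ y ∈ P, g x = g y := by
  cases P with
  | nil => intro x hx; cases hx
  | cons d P' =>
    intro x hx y hy
    have hcc : List.Chain R d P' := hc
    have h1 : ∀ z ∈ d :: P', g z = g d := by
      intro z hz
      rcases List.mem_cons.mp hz with rfl | hz'
      · rfl
      · exact chain_const g R hR d P' hcc z hz'
    rw [h1 x hx, h1 y hy]

section Tree3

variable {S : CombSurface} {n : ℕ} {cost : S.D → Fin n → ℝ} {v : S.V}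

/-- `Phi` is constant along a cut path of the 2-core. -/
lemma Phi_cutPath_const (T : SPTree S cost v) (η : S.D → ℝ) (hη : DualCirc S η)
    (q r : S.F) (P : List S.D)
    (hP : IsCutPath S (twoCore S {e | e ∉ T.treeDarts} q r) q r P)
    {d₁ d₂ : S.D} (h₁ : d₁ ∈ P) (h₂ : d₂ ∈ P) :
    Phi T η d₁ = Phi T η d₂ := by
  refine chain'_const (Phi T η) _ ?_ P hP.2 d₁ h₁ d₂ h₂
  intro a b hab
  obtain ⟨hlr, hq, hr, hdeg⟩ := hab
  have hsum := Phi_facesum T η hη (S.right a)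
  have hsub : ({S.rev a, b} : Finset S.D)
      ⊆ univ.filter (fun e => S.left e = S.right a) := by
    intro e he
    simp only [Finset.mem_insert, Finset.mem_singleton] at he
    rcases he with rfl | rfl
    · simp [left_rev]
    · simp [hlr.symm]
  have hvanish : ∀ e ∈ univ.filter (fun e => S.left e = S.right a),
      e ∉ ({S.rev a, b} : Finset S.D) → Phi T η e = 0 := by
    intro e he hnotin
    by_contra hP0
    have hmem2 : e ∈ twoCore S {e | e ∉ T.treeDarts} q r :=
      Phi_supp_twoCore T η hη q r hP0
    have hlefte : S.left e = S.right a := by simpa using he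
    rcases hdeg e hmem2 hlefte with h | h
    · exact hnotin (by simp [h])
    · exact hnotin (by simp [h])
  have hsumpair : ∑ e ∈ ({S.rev a, b} : Finset S.D), Phi T η e = 0 := by
    rw [Finset.sum_subset hsub hvanish]
    exact hsum
  by_cases hcase : S.rev a = b
  · have hba : Phi T η b = 0 := by
      rw [← hcase] at hsumpair ⊢
      simpa using hsumpair
    have haa : Phi T η a = 0 := by
      have := Phi_antisym T η hη.1 a
      rw [hcase, hba] at this
      linarith
    rw [haa, hba]
  · rw [Finset.sum_insert (by simpa using hcase), Finset.sum_singleton] at hsumpair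
    have := Phi_antisym T η hη.1 a
    linarith

end Tree3

/-- Summing a list flow against a function. -/
lemma listFlow_mul_sum (S : CombSurface) (η : S.D → ℝ) (P : List S.D) :
    ∑ d, listFlow S P d * η d = (P.map η).sum := by
  induction P with
  | nil => simp [listFlow]
  | cons e P' ih =>
    simp only [List.map_cons, List.sum_cons]
    rw [← ih]
    have hcount : ∀ d, listFlow S (e :: P') d = listFlow S P' d
        + (if d = e then (1 : ℝ) else 0) := by
      intro d
      unfold listFlow
      rw [List.count_cons]
      push_cast
      by_cases h : d = e
      · simp [h]
      · have h' : ¬ e = d := fun hh => h hh.symm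
        simp [h, h']
    have : ∑ d, listFlow S (e :: P') d * η d
        = ∑ d, (listFlow S P' d * η d + (if d = e then (1:ℝ) else 0) * η d) := by
      apply Finset.sum_congr rfl
      intro d _
      rw [hcount d]
      ring
    rw [this, Finset.sum_add_distrib]
    have : ∑ d, (if d = e then (1:ℝ) else 0) * η d = η e := by
      rw [Finset.sum_eq_single_of_mem e (Finset.mem_univ e)]
      · simp
      · intro b _ hb
        simp [hb]
    rw [this]
    ring

end HolAux

/-- Lemma `fundamental_cycle_sigs` of the paper.  Fix an oriented cut
path `P` of the 2-core of the cut graph `X` complementary to the holiest shortest path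
tree `T` (where `X` consists of the darts not in `T`, and the 2-core keeps the dual
vertices `q = right(v→u)` and `r`), and let `d₁` and `d₂` be darts of `P`.  Then the
fundamental cycles `cycle(T, d₁)` and `cycle(T, d₂)` (realized by the simple closed walks
`d₁ :: K₁` and `d₂ :: K₂`) are homologous; in particular their homology signatures are
equal. -/
theorem holiest_cut_path_sigs (S : CombSurface) (H : HomologyBasis S) (z : S.D → ℝ)
    (r : S.F) (hz : S.IsDrainage z r) (c : S.D → ℝ)
    (hpos : ∀ (w : S.V) (P : List S.D), P ≠ [] → IsWalk S w w P → 0 < (P.map c).sum)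
    (duv : S.D) (hleft : S.left duv = r) (hne : S.head duv ≠ S.tail duv)
    (lam : Fin (2 * S.g + 2) → ℝ)
    (T : SPTree S (fun d => if d = duv then lam else dartCostMod S H z c d)
      (S.tail duv))
    (hpredu : T.pred (S.head duv) = duv)
    (P : List S.D)
    (hP : IsCutPath S (twoCore S {d | d ∉ T.treeDarts} (S.right duv) r)
      (S.right duv) r P)
    (d₁ d₂ : S.D) (h₁ : d₁ ∈ P) (h₂ : d₂ ∈ P)
    (K₁ K₂ : List S.D)
    (hK₁ : IsFundCycleWalk S T.treeDarts d₁ K₁)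
    (hK₂ : IsFundCycleWalk S T.treeDarts d₂ K₂) :
    (∃ α : S.F → ℝ, S.IsBoundary
        (fun e => listFlow S (d₁ :: K₁) e - listFlow S (d₂ :: K₂) e) α) ∧
      cycleSig S H d₁ K₁ = cycleSig S H d₂ K₂ := by
  classical
  have main : ∀ η : S.D → ℝ, HolAux.DualCirc S η →
      ∑ d, (listFlow S (d₁ :: K₁) d - listFlow S (d₂ :: K₂) d) * η d = 0 := by
    intro η hη
    have h1 : ∑ d, (listFlow S (d₁ :: K₁) d - listFlow S (d₂ :: K₂) d) * η d
        = ∑ d, listFlow S (d₁ :: K₁) d * η d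
          - ∑ d, listFlow S (d₂ :: K₂) d * η d := by
      rw [← Finset.sum_sub_distrib]
      apply Finset.sum_congr rfl
      intro d _
      ring
    rw [h1, HolAux.listFlow_mul_sum, HolAux.listFlow_mul_sum,
      HolAux.fundcycle_sum T η hη.1 hK₁, HolAux.fundcycle_sum T η hη.1 hK₂,
      HolAux.Phi_cutPath_const T η hη (S.right duv) r P hP h₁ h₂]
    ring
  constructor
  · -- the difference flow is a boundary
    set f : S.D → ℝ := fun e => listFlow S (d₁ :: K₁) e - listFlow S (d₂ :: K₂) e
      with hf
    let L : (S.F → ℝ) →ₗ[ℝ] EuclideanSpace ℝ S.D :=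
      { toFun := fun β => WithLp.toLp 2 (fun d => β (S.right d) - β (S.left d) : S.D → ℝ)
        map_add' := by
          intro x y
          ext d
          show (x (S.right d) + y (S.right d)) - (x (S.left d) + y (S.left d))
            = (x (S.right d) - x (S.left d)) + (y (S.right d) - y (S.left d))
          ring
        map_smul' := by
          intro cc x
          ext d
          show cc * x (S.right d) - cc * x (S.left d)
            = cc * (x (S.right d) - x (S.left d))
          ring }
    have hLval : ∀ (φ : S.F → ℝ) (d : S.D), (L φ) d = φ (S.right d) - φ (S.left d) :=
      fun φ d => rfl
    set U : Submodule ℝ (EuclideanSpace ℝ S.D) := LinearMap.range L with hU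
    set F0 : EuclideanSpace ℝ S.D := WithLp.toLp 2 (fun d => f d - f (S.rev d)) with hF0
    obtain ⟨y, hy, zz, hzz, hdecomp⟩ := U.exists_add_mem_mem_orthogonal F0
    obtain ⟨α, hα⟩ := LinearMap.mem_range.1 hy
    have hz_apply : ∀ d, zz d = F0 d - (L α) d := by
      intro d
      have h := congrFun (congrArg WithLp.ofLp hdecomp) d
      have h2 : (y + zz) d = y d + zz d := rfl
      rw [h2, ← hα] at h
      linarith
    have hzanti : ∀ d, zz (S.rev d) = - zz d := by
      intro d
      have h1 := hz_apply (S.rev d)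
      have h2 := hz_apply d
      have hL : (L α) (S.rev d) = - (L α) d := by
        rw [hLval, hLval, HolAux.right_rev, HolAux.left_rev]
        ring
      have hF : F0 (S.rev d) = - F0 d := by
        show f (S.rev d) - f (S.rev (S.rev d)) = -(f d - f (S.rev d))
        rw [S.rev_invol]
        ring
      rw [h1, h2, hL, hF]
      ring
    have hzleft : ∀ p, ∑ e ∈ univ.filter (fun e => S.left e = p), zz e = 0 := by
      intro p
      set φ : S.F → ℝ := fun o => if o = p then (1 : ℝ) else 0 with hφ
      have hmemU : L φ ∈ U := LinearMap.mem_range_self L φ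
      have hinner : ⟪L φ, zz⟫ = 0 :=
        (Submodule.mem_orthogonal U zz).mp hzz _ hmemU
      have hexp : ⟪L φ, zz⟫
          = (∑ e ∈ univ.filter (fun e => S.right e = p), zz e)
            - ∑ e ∈ univ.filter (fun e => S.left e = p), zz e := by
        rw [PiLp.inner_apply]
        have hpt : ∀ d : S.D, ⟪(L φ) d, zz d⟫
            = (if S.right d = p then zz d else 0)
              - (if S.left d = p then zz d else 0) := by
          intro d
          rw [RCLike.inner_apply, starRingEnd_apply, star_trivial, hLval]
          simp only [hφ]
          by_cases h1 : S.right d = p <;> by_cases h2 : S.left d = p <;>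
            simp [h1, h2]
        rw [Finset.sum_congr rfl (fun d _ => hpt d), Finset.sum_sub_distrib,
          ← Finset.sum_filter, ← Finset.sum_filter]
      have hleftright := HolAux.sum_left_of_antisym S zz hzanti p
      rw [hexp] at hinner
      linarith
    have hpair : ∑ d, f d * zz d = 0 := main zz ⟨hzanti, hzleft⟩
    have hpairrev : ∑ d, f (S.rev d) * zz d = - ∑ d, f d * zz d := by
      have hcomp := Equiv.sum_comp (Function.Involutive.toPerm S.rev S.rev_invol)
        (fun d => f (S.rev d) * zz d)
      have h1 : ∑ d, f (S.rev (S.rev d)) * zz (S.rev d)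
          = ∑ d, f (S.rev d) * zz d := hcomp
      have h2 : ∑ d, f (S.rev (S.rev d)) * zz (S.rev d)
          = ∑ d, - (f d * zz d) := by
        apply Finset.sum_congr rfl
        intro d _
        rw [S.rev_invol, hzanti]
        ring
      rw [h2] at h1
      rw [← h1, Finset.sum_neg_distrib]
    have hinnerF : ⟪F0, zz⟫ = 0 := by
      rw [PiLp.inner_apply]
      have hpt : ∀ d : S.D, ⟪F0 d, zz d⟫ = f d * zz d - f (S.rev d) * zz d := by
        intro d
        rw [RCLike.inner_apply, starRingEnd_apply, star_trivial]
        show zz d * (f d - f (S.rev d)) = _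
        ring
      rw [Finset.sum_congr rfl (fun d _ => hpt d), Finset.sum_sub_distrib,
        hpair, hpairrev, hpair]
      ring
    have hyz : ⟪y, zz⟫ = 0 := (Submodule.mem_orthogonal U zz).mp hzz y hy
    have hzz0 : zz = 0 := by
      have h1 : ⟪F0, zz⟫ = ⟪y, zz⟫ + ⟪zz, zz⟫ := by
        rw [hdecomp, inner_add_left]
      rw [hinnerF, hyz] at h1
      have : ⟪zz, zz⟫ = 0 := by linarith
      exact inner_self_eq_zero.mp this
    have hFL : F0 = L α := by
      rw [hdecomp, ← hα, hzz0, add_zero]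
    refine ⟨α, ?_⟩
    intro d
    have hd := congrFun (congrArg WithLp.ofLp hFL) d
    rw [hLval] at hd
    exact hd
  · -- equality of homology signatures
    funext i
    have hc := HolAux.cyc_dualCirc S H i
    have e1 := HolAux.fundcycle_sum T (fun d => (H.cyc i d : ℝ)) hc.1 hK₁
    have e2 := HolAux.fundcycle_sum T (fun d => (H.cyc i d : ℝ)) hc.1 hK₂
    have e3 := HolAux.Phi_cutPath_const T (fun d => (H.cyc i d : ℝ)) hc
      (S.right duv) r P hP h₁ h₂
    show (H.cyc i d₁ : ℝ) + (K₁.map fun e => (H.cyc i e : ℝ)).sum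
        = (H.cyc i d₂ : ℝ) + (K₂.map fun e => (H.cyc i e : ℝ)).sum
    simp only [List.map_cons, List.sum_cons] at e1 e2
    rw [e1, e2, e3]
end
end
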